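/- The power series z·exp(Σ_{m≥1} (2m)!/(m!)² · zᵐ/m) equals 4z/(1+√(1-4z))², as formal power series (equivalently, as analytic functions for |z| < 1/4). -/

import Mathlib

open Real

noncomputable section MahlerAux

/-- abbreviation for the central binomial coefficient as a real -/
def cb (m : ℕ) : ℝ := Nat.centralBinom m

lemma cb_pos (m : ℕ) : 0 < cb m := by
  unfold cb; exact_mod_cast Nat.centralBinom_pos m

lemma cb_le (m : ℕ) : cb m ≤ 4 ^ m := by
  have h : Nat.centralBinom m ≤ 4 ^ m := by
    calc Nat.centralBinom m = (2 * m).choose m := rfl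
      _ ≤ (2 * m + 1).choose m := Nat.choose_le_choose m (Nat.le_succ _)
      _ ≤ 4 ^ m := Nat.choose_middle_le_pow m
  calc cb m = (Nat.centralBinom m : ℝ) := rfl
    _ ≤ ((4:ℕ) ^ m : ℕ) := by exact_mod_cast h
    _ = 4 ^ m := by push_cast; ring

/-- F z = ∑ C_{m+1} z^{m+1} -/
def F (z : ℝ) : ℝ := ∑' m : ℕ, cb (m+1) * z ^ (m+1)

/-- termwise derivative of F -/
def D (z : ℝ) : ℝ := ∑' m : ℕ, ((m : ℝ) + 1) * cb (m+1) * z ^ m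

/-- G z : the series in the theorem -/
def G (z : ℝ) : ℝ := ∑' m : ℕ, cb (m+1) * z ^ (m+1) / ((m : ℝ) + 1)

/-- termwise derivative of G -/
def E (z : ℝ) : ℝ := ∑' m : ℕ, cb (m+1) * z ^ m

lemma summable_geo_aux {r : ℝ} (hr : 0 ≤ r) (h : r < 1/4) :
    Summable (fun m : ℕ => 4 * ((4*r) ^ m)) :=
  (summable_geometric_of_lt_one (by positivity) (by linarith)).mul_left 4

lemma summable_lin_geo_aux {r : ℝ} (hr : 0 ≤ r) (h : r < 1/4) :
    Summable (fun m : ℕ => 4 * (((m:ℝ) + 1) * (4*r) ^ m)) := by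
  have h1 : Summable (fun m : ℕ => (m:ℝ) ^ 1 * (4*r) ^ m) := by
    apply summable_pow_mul_geometric_of_norm_lt_one
    rw [Real.norm_eq_abs, abs_of_nonneg (by positivity)]; linarith
  have h2 : Summable (fun m : ℕ => (4*r) ^ m) :=
    summable_geometric_of_lt_one (by positivity) (by linarith)
  have := (h1.add h2).mul_left 4
  refine this.congr fun m => by push_cast; ring

lemma E_bound {r : ℝ} (m : ℕ) {y : ℝ} (hy : |y| ≤ r) :
    ‖cb (m+1) * y ^ m‖ ≤ 4 * ((4*r) ^ m) := by
  have hr : 0 ≤ r := le_trans (abs_nonneg y) hy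
  have h1 : ‖cb (m+1) * y ^ m‖ = cb (m+1) * |y| ^ m := by
    rw [norm_mul, norm_pow, Real.norm_eq_abs, Real.norm_eq_abs,
      abs_of_pos (cb_pos _)]
  rw [h1]
  calc cb (m+1) * |y| ^ m ≤ 4 ^ (m+1) * r ^ m := by
        apply mul_le_mul (cb_le _) (pow_le_pow_left₀ (abs_nonneg y) hy m)
          (by positivity) (by positivity)
    _ = 4 * ((4*r) ^ m) := by rw [mul_pow]; ring

lemma D_bound {r : ℝ} (m : ℕ) {y : ℝ} (hy : |y| ≤ r) :
    ‖((m:ℝ) + 1) * cb (m+1) * y ^ m‖ ≤ 4 * (((m:ℝ)+1) * (4*r) ^ m) := by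
  have hr : 0 ≤ r := le_trans (abs_nonneg y) hy
  have h1 : ‖((m:ℝ) + 1) * cb (m+1) * y ^ m‖ = ((m:ℝ)+1) * cb (m+1) * |y| ^ m := by
    rw [norm_mul, norm_mul, norm_pow, Real.norm_eq_abs, Real.norm_eq_abs, Real.norm_eq_abs,
      abs_of_pos (cb_pos _), abs_of_pos (by positivity : (0:ℝ) < (m:ℝ)+1)]
  rw [h1]
  calc ((m:ℝ)+1) * cb (m+1) * |y| ^ m ≤ ((m:ℝ)+1) * 4 ^ (m+1) * r ^ m := by
        apply mul_le_mul (mul_le_mul_of_nonneg_left (cb_le _) (by positivity))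
          (pow_le_pow_left₀ (abs_nonneg y) hy m) (by positivity) (by positivity)
    _ = 4 * (((m:ℝ)+1) * (4*r) ^ m) := by rw [mul_pow]; ring

lemma summable_E {z : ℝ} (hz : |z| < 1/4) : Summable (fun m : ℕ => cb (m+1) * z ^ m) :=
  Summable.of_norm_bounded (summable_geo_aux (abs_nonneg z) hz)
    (fun m => E_bound m le_rfl)

lemma summable_D {z : ℝ} (hz : |z| < 1/4) :
    Summable (fun m : ℕ => ((m : ℝ) + 1) * cb (m+1) * z ^ m) :=
  Summable.of_norm_bounded (summable_lin_geo_aux (abs_nonneg z) hz)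
    (fun m => D_bound m le_rfl)

lemma hasSum_F {z : ℝ} (hz : |z| < 1/4) :
    HasSum (fun m : ℕ => cb (m+1) * z ^ (m+1)) (F z) := by
  have : Summable (fun m : ℕ => cb (m+1) * z ^ (m+1)) := by
    refine ((summable_E hz).mul_left z).congr fun m => by ring
  exact this.hasSum

lemma hasDerivAt_F {z : ℝ} (hz : |z| < 1/4) : HasDerivAt F (D z) z := by
  set r : ℝ := (|z| + 1/4)/2 with hr
  have hzr : |z| < r := by rw [hr]; linarith
  have hr4 : r < 1/4 := by rw [hr]; linarith
  have hr0 : 0 ≤ r := le_trans (abs_nonneg z) hzr.le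
  have := hasDerivAt_tsum_of_isPreconnected
    (u := fun m : ℕ => 4 * (((m:ℝ)+1) * (4*r) ^ m))
    (g := fun m y => cb (m+1) * y ^ (m+1))
    (g' := fun m y => ((m:ℝ)+1) * cb (m+1) * y ^ m)
    (summable_lin_geo_aux hr0 hr4) (Metric.isOpen_ball (x := (0:ℝ)) (ε := r))
    (convex_ball (0:ℝ) r).isPreconnected
    (fun m y _ => by
      have := (hasDerivAt_pow (m+1) y).const_mul (cb (m+1))
      refine this.congr_deriv (Eq.symm ?_)
      push_cast; ring)
    (fun m y hy => by
      have : |y| ≤ r := by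
        have := Metric.mem_ball.mp hy
        rw [Real.dist_eq, sub_zero] at this; exact this.le
      exact D_bound m this)
    (Metric.mem_ball_self (lt_of_le_of_lt (abs_nonneg z) hzr))
    (by simpa using summable_zero)
    (by rw [Metric.mem_ball, Real.dist_eq, sub_zero]; exact hzr)
  exact this

lemma hasDerivAt_G {z : ℝ} (hz : |z| < 1/4) : HasDerivAt G (E z) z := by
  set r : ℝ := (|z| + 1/4)/2 with hr
  have hzr : |z| < r := by rw [hr]; linarith
  have hr4 : r < 1/4 := by rw [hr]; linarith
  have hr0 : 0 ≤ r := le_trans (abs_nonneg z) hzr.le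
  have := hasDerivAt_tsum_of_isPreconnected
    (u := fun m : ℕ => 4 * ((4*r) ^ m))
    (g := fun m y => cb (m+1) * y ^ (m+1) / ((m:ℝ)+1))
    (g' := fun m y => cb (m+1) * y ^ m)
    (summable_geo_aux hr0 hr4) (Metric.isOpen_ball (x := (0:ℝ)) (ε := r))
    (convex_ball (0:ℝ) r).isPreconnected
    (fun m y _ => by
      have h0 : ((m:ℝ)+1) ≠ 0 := by positivity
      have := ((hasDerivAt_pow (m+1) y).const_mul (cb (m+1))).div_const ((m:ℝ)+1)
      refine this.congr_deriv (Eq.symm ?_)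
      push_cast
      field_simp)
    (fun m y hy => by
      have : |y| ≤ r := by
        have := Metric.mem_ball.mp hy
        rw [Real.dist_eq, sub_zero] at this; exact this.le
      exact E_bound m this)
    (Metric.mem_ball_self (lt_of_le_of_lt (abs_nonneg z) hzr))
    (by simpa using summable_zero)
    (by rw [Metric.mem_ball, Real.dist_eq, sub_zero]; exact hzr)
  exact this

lemma cb_zero : cb 0 = 1 := by unfold cb; norm_num [Nat.centralBinom]

lemma ode_F {z : ℝ} (hz : |z| < 1/4) : (1 - 4*z) * D z = 2 * (1 + F z) := by
  have hD : HasSum (fun m : ℕ => ((m:ℝ)+1) * cb (m+1) * z ^ m) (D z) := (summable_D hz).hasSum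
  set P : ℕ → ℝ := fun m => 4 * (m:ℝ) * cb m * z ^ m with hPdef
  have hP1 : HasSum (fun m : ℕ => P (m+1)) (4*z*(D z)) := by
    have h4 := hD.mul_left (4*z)
    have heq : (fun m : ℕ => 4*z*(((m:ℝ)+1)*cb (m+1)*z^m)) = fun m : ℕ => P (m+1) := by
      funext m; simp only [hPdef]; push_cast; ring
    rwa [heq] at h4
  have hP : HasSum P (4*z*(D z)) := by
    have h := (hasSum_nat_add_iff (f := P) 1).mp hP1
    have hsum0 : ∑ i ∈ Finset.range 1, P i = 0 := by simp [hPdef]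
    rwa [hsum0, add_zero] at h
  have hcb : HasSum (fun m : ℕ => cb m * z ^ m) (F z + 1) := by
    have h := (hasSum_nat_add_iff (f := fun m : ℕ => cb m * z ^ m) 1).mp (hasSum_F hz)
    simpa [cb_zero] using h
  have hL : HasSum (fun m : ℕ => ((m:ℝ)+1)*cb (m+1)*z^m - P (m+1)) (D z - 4*z*(D z)) :=
    hD.sub hP1
  have hR : HasSum (fun m : ℕ => 2*(cb m * z^m) + (P m - P (m+1)))
      (2*(F z + 1) + (4*z*(D z) - 4*z*(D z))) := (hcb.mul_left 2).add (hP.sub hP1)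
  have heq3 : (fun m : ℕ => ((m:ℝ)+1)*cb (m+1)*z^m - P (m+1))
      = (fun m : ℕ => 2*(cb m * z^m) + (P m - P (m+1))) := by
    funext m
    have hrec : ((m:ℝ)+1) * cb (m+1) = 2*(2*(m:ℝ)+1)*cb m := by
      unfold cb; exact_mod_cast Nat.succ_mul_centralBinom_succ m
    simp only [hPdef]
    push_cast
    linear_combination z^m * hrec
  rw [heq3] at hL
  have huniq := hL.unique hR
  linear_combination huniq

lemma F_zero : F 0 = 0 := by
  unfold F; simp

lemma G_zero : G 0 = 0 := by
  unfold G; simp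

lemma sqrt_pos' {z : ℝ} (hz : |z| < 1/4) : 0 < Real.sqrt (1 - 4*z) := by
  have h := abs_lt.mp hz
  exact Real.sqrt_pos.mpr (by linarith [h.1, h.2])

lemma one_sub_pos {z : ℝ} (hz : |z| < 1/4) : 0 < 1 - 4*z := by
  have h := abs_lt.mp hz
  linarith [h.1, h.2]

lemma hasDerivAt_sqrt' {z : ℝ} (hz : |z| < 1/4) :
    HasDerivAt (fun x => Real.sqrt (1 - 4*x)) (-2 / Real.sqrt (1 - 4*z)) z := by
  have h1 : (1 - 4*z) ≠ 0 := (one_sub_pos hz).ne'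
  have hin : HasDerivAt (fun x : ℝ => 1 - 4*x) (-4) z := by
    simpa using ((hasDerivAt_id z).const_mul (4:ℝ)).const_sub (1:ℝ)
  have := (Real.hasDerivAt_sqrt h1).comp z hin
  have hs : Real.sqrt (1 - 4*z) ≠ 0 := (sqrt_pos' hz).ne'
  refine this.congr_deriv (Eq.symm ?_)
  field_simp
  ring

/-- constancy helper -/
lemma const_aux {f : ℝ → ℝ} (hf : ∀ x, |x| < 1/4 → HasDerivAt f 0 x) {z : ℝ}
    (hz : |z| < 1/4) : f z = f 0 := by
  obtain ⟨hz1, hz2⟩ := abs_lt.mp hz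
  rcases le_or_gt 0 z with h0 | h0
  · have key := constant_of_has_deriv_right_zero (f := f) (a := 0) (b := z)
      (fun x hx => (hf x (abs_lt.mpr ⟨by linarith [hx.1], by linarith [hx.2]⟩)).continuousAt.continuousWithinAt)
      (fun x hx => (hf x (abs_lt.mpr ⟨by linarith [hx.1], by linarith [hx.2]⟩)).hasDerivWithinAt)
    exact key z (Set.right_mem_Icc.mpr h0)
  · have key := constant_of_has_deriv_right_zero (f := f) (a := z) (b := 0)
      (fun x hx => (hf x (abs_lt.mpr ⟨by linarith [hx.1], by linarith [hx.2]⟩)).continuousAt.continuousWithinAt)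
      (fun x hx => (hf x (abs_lt.mpr ⟨by linarith [hx.1], by linarith [hx.2]⟩)).hasDerivWithinAt)
    exact (key 0 (Set.right_mem_Icc.mpr h0.le)).symm

lemma F_closed {z : ℝ} (hz : |z| < 1/4) : 1 + F z = 1 / Real.sqrt (1 - 4*z) := by
  set W : ℝ → ℝ := fun x => (1 + F x) * Real.sqrt (1 - 4*x) with hW
  have hWd : ∀ x, |x| < 1/4 → HasDerivAt W 0 x := by
    intro x hx
    have h1 : HasDerivAt (fun y => 1 + F y) (D x) x := (hasDerivAt_F hx).const_add 1
    have h2 := hasDerivAt_sqrt' hx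
    have := h1.mul h2
    refine this.congr_deriv (Eq.symm ?_)
    have hs : Real.sqrt (1 - 4*x) ≠ 0 := (sqrt_pos' hx).ne'
    have hsq : Real.sqrt (1 - 4*x) ^ 2 = 1 - 4*x := Real.sq_sqrt (one_sub_pos hx).le
    have hode := ode_F hx
    field_simp
    linear_combination (-(D x)) * hsq - hode
  have key : W z = W 0 := const_aux hWd hz
  have hW0 : W 0 = 1 := by simp [hW, F_zero]
  have hs : Real.sqrt (1 - 4*z) ≠ 0 := (sqrt_pos' hz).ne'
  rw [eq_div_iff hs]
  rw [hW] at key hW0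
  simpa using key.trans hW0

lemma E_closed {z : ℝ} (hz : |z| < 1/4) :
    E z = 4 / (Real.sqrt (1 - 4*z) * (1 + Real.sqrt (1 - 4*z))) := by
  have hE : HasSum (fun m : ℕ => cb (m+1) * z ^ m) (E z) := (summable_E hz).hasSum
  have hzE : HasSum (fun m : ℕ => cb (m+1) * z ^ (m+1)) (z * E z) := by
    have heq : (fun m : ℕ => z * (cb (m+1) * z ^ m)) = fun m : ℕ => cb (m+1) * z ^ (m+1) := by
      funext m; ring
    have h := hE.mul_left z
    rwa [heq] at h
  have h1 : z * E z = F z := hzE.unique (hasSum_F hz)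
  rcases eq_or_ne z 0 with rfl | hz0
  · have hE0 : E 0 = cb 1 := by
      unfold E
      rw [tsum_eq_single 0 (fun m hm => by simp [zero_pow hm])]
      simp
    rw [hE0]
    have hs1 : Real.sqrt (1 - 4*(0:ℝ)) = 1 := by norm_num
    rw [hs1]
    have : cb 1 = 2 := by unfold cb; norm_num [Nat.centralBinom]
    rw [this]; norm_num
  · have hspos := sqrt_pos' hz
    set s := Real.sqrt (1 - 4*z) with hs
    have hsq : s ^ 2 = 1 - 4*z := Real.sq_sqrt (one_sub_pos hz).le
    have h1s : (0:ℝ) < 1 + s := by linarith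
    have hF := F_closed hz
    have hFs : (1 + F z) * s = 1 := by
      rw [hF, ← hs]; field_simp
    rw [eq_div_iff (by positivity)]
    have hmul : z * (E z * (s * (1 + s))) = z * 4 := by
      linear_combination (s*(1+s)) * h1 + (1+s) * hFs - hsq
    exact mul_left_cancel₀ hz0 hmul

/-- the logarithmic closed form -/
def H (z : ℝ) : ℝ := -2 * Real.log ((1 + Real.sqrt (1 - 4*z)) / 2)

lemma hasDerivAt_H {z : ℝ} (hz : |z| < 1/4) :
    HasDerivAt H (4 / (Real.sqrt (1 - 4*z) * (1 + Real.sqrt (1 - 4*z)))) z := by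
  have hspos := sqrt_pos' hz
  set s := Real.sqrt (1 - 4*z) with hs
  have h2 := hasDerivAt_sqrt' hz
  have h3 : HasDerivAt (fun x => (1 + Real.sqrt (1 - 4*x))/2) ((-2/s)/2) z :=
    (h2.const_add 1).div_const 2
  have hne : (1 + s)/2 ≠ 0 := by positivity
  have h4 := h3.log hne
  have h5 := h4.const_mul (-2 : ℝ)
  refine h5.congr_deriv (Eq.symm ?_)
  rw [← hs]
  field_simp
  ring

lemma G_eq_H {z : ℝ} (hz : |z| < 1/4) : G z = H z := by
  have hd : ∀ x, |x| < 1/4 → HasDerivAt (fun y => G y - H y) 0 x := by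
    intro x hx
    have := (hasDerivAt_G hx).sub (hasDerivAt_H hx)
    rwa [E_closed hx, sub_self] at this
  have key := const_aux hd hz
  have hH0 : H 0 = 0 := by norm_num [H]
  simp only [G_zero, hH0, sub_zero] at key
  linarith [key]

end MahlerAux

theorem mahler_exp_closed_form (z : ℝ) (hz : |z| < 1 / 4) :
    z * Real.exp (∑' m : ℕ, (Nat.centralBinom (m + 1) : ℝ) * z ^ (m + 1) / (m + 1))
      = 4 * z / (1 + Real.sqrt (1 - 4 * z)) ^ 2 := by
  have hG : (∑' m : ℕ, (Nat.centralBinom (m + 1) : ℝ) * z ^ (m + 1) / (m + 1)) = G z := rfl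
  rw [hG, G_eq_H (by simpa using hz)]
  set s := Real.sqrt (1 - 4*z) with hs
  have hspos : 0 < s := sqrt_pos' (by simpa using hz)
  have ht : (0:ℝ) < (1 + s) / 2 := by linarith
  have : H z = Real.log (((1 + s)/2)⁻¹ ^ 2) := by
    rw [Real.log_pow, Real.log_inv]; unfold H; push_cast; ring
  rw [this, Real.exp_log (by positivity)]
  have h1s : (1 + s) ≠ 0 := by linarith
  field_simp
  ring
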